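/- Let T be trace class and Π a projection of multiplication by a compactly supported function such that ρ(H)Π is trace class and Ω₊Π_fΩ₊* commutes with ρ(H) (where Ω₊ is a wave operator intertwining H̊ and H, and [H̊,Π_f]=0). Then Tr(Ω₊Π_fΩ₊*[ρ(H),Π]) = 0. -/
import Mathlib


open ContinuousLinearMap

/-- Continuity-equation lemma: if `π` is a compactly supported
multiplication operator with `[ρ(H), π]` and `ρ(H) π` trace class, if
`S = Ω₊ Π_f Ω₊*` commutes with `ρ(H)` (by the intertwining property of the wave operator
and `[H̊, Π_f] = 0`), and `ρ(H) S π` is trace class, then `Tr (S [ρ(H), π]) = 0`. -/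
theorem continuity_equation_trace_vanishes
    {𝓗 : Type*} [NormedAddCommGroup 𝓗] [InnerProductSpace ℂ 𝓗] [CompleteSpace 𝓗]
    -- abstract trace-class ideal and trace
    (TC : (𝓗 →L[ℂ] 𝓗) → Prop) (Tr : (𝓗 →L[ℂ] 𝓗) → ℂ)
    (hTC_mul_left : ∀ A B : 𝓗 →L[ℂ] 𝓗, TC A → TC (B ∘L A))
    (hTC_mul_right : ∀ A B : 𝓗 →L[ℂ] 𝓗, TC A → TC (A ∘L B))
    (hTr_sub : ∀ A B : 𝓗 →L[ℂ] 𝓗, TC A → TC B → Tr (A - B) = Tr A - Tr B)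
    (hTr_cyc : ∀ A B : 𝓗 →L[ℂ] 𝓗, TC A → Tr (A ∘L B) = Tr (B ∘L A))
    -- the wave operator Ω₊ and the lead projection Π_f
    (Ωp Pf : 𝓗 →L[ℂ] 𝓗) (hPf_proj : Pf ∘L Pf = Pf) (hPf_sa : IsSelfAdjoint Pf)
    (S : 𝓗 →L[ℂ] 𝓗) (hS : S = Ωp ∘L Pf ∘L adjoint Ωp)
    -- ρ(H) and the compactly supported projection π = π₁
    (ρH π1 : 𝓗 →L[ℂ] 𝓗) (hπ1_proj : π1 ∘L π1 = π1) (hπ1_sa : IsSelfAdjoint π1)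
    (hTC_comm : TC (ρH ∘L π1 - π1 ∘L ρH))
    (hTC_ρπ : TC (ρH ∘L π1))
    (hTC_ρSπ : TC (ρH ∘L S ∘L π1))
    -- intertwining: S commutes with ρ(H)
    (hcomm : S ∘L ρH = ρH ∘L S) :
    Tr (S ∘L (ρH ∘L π1 - π1 ∘L ρH)) = 0 := by
  -- reinterpret composition as ring multiplication (definitional)
  have cyc : ∀ A B : 𝓗 →L[ℂ] 𝓗, TC A → Tr (A * B) = Tr (B * A) := hTr_cyc
  have tsub : ∀ A B : 𝓗 →L[ℂ] 𝓗, TC A → TC B → Tr (A - B) = Tr A - Tr B := hTr_sub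
  have mulL : ∀ A B : 𝓗 →L[ℂ] 𝓗, TC A → TC (B * A) := hTC_mul_left
  have mulR : ∀ A B : 𝓗 →L[ℂ] 𝓗, TC A → TC (A * B) := hTC_mul_right
  set a : 𝓗 →L[ℂ] 𝓗 := ρH with ha
  set p : 𝓗 →L[ℂ] 𝓗 := π1 with hp
  set s : 𝓗 →L[ℂ] 𝓗 := S with hs
  have hpp : p * p = p := hπ1_proj
  have hsa : s * a = a * s := hcomm
  set d : 𝓗 →L[ℂ] 𝓗 := a * p - p * a with hd
  have TCd : TC d := hTC_comm
  have TCap : TC (a * p) := hTC_ρπ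
  have TCasp : TC (a * (s * p)) := hTC_ρSπ
  show Tr (s * d) = 0
  -- trace-class facts
  have TCsd : TC (s * d) := mulL d s TCd
  have TCsdp : TC (s * d * p) := mulR _ p TCsd
  have TCaps : TC (a * p * s) := mulR _ s TCap
  have TCpaps : TC (p * (a * p * s)) := mulL _ p TCaps
  have TCapsp : TC (a * p * (s * p)) := mulR _ (s * p) TCap
  have TCpasp : TC (p * (a * (s * p))) := mulL _ p TCasp
  -- step 0: Tr(s p d) = Tr(s d) - Tr(s d p), since d = d p + p d
  have hdsplit : s * (p * d) = s * d - s * d * p := by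
    rw [hd]
    simp only [mul_sub, sub_mul, mul_assoc, hpp]
    rw [show p * (p * a) = p * a by rw [← mul_assoc, hpp]]
    abel
  have E0 : Tr (s * (p * d)) = Tr (s * d) - Tr (s * d * p) := by
    rw [hdsplit]; exact tsub _ _ TCsd TCsdp
  -- step 1: Tr(s d p) = Tr(a p s) - Tr(p (a p s))
  have c1 : Tr (s * d * p) = Tr (d * (p * s)) := by
    rw [cyc (s * d) p TCsd, ← mul_assoc p s d, ← cyc d (p * s) TCd]
  have E1 : Tr (s * d * p) = Tr (a * p * s) - Tr (p * (a * p * s)) := by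
    rw [c1]
    have hop : d * (p * s) = a * p * s - p * (a * p * s) := by
      rw [hd, sub_mul]
      congr 1
      rw [mul_assoc a p (p * s), ← mul_assoc p p s, hpp, ← mul_assoc a p s]
    rw [hop]; exact tsub _ _ TCaps TCpaps
  -- step 2: Tr(s p d) = Tr(a p (s p)) - Tr(p (a (s p)))
  have c2 : Tr (s * (p * d)) = Tr (d * (s * p)) := by
    rw [← mul_assoc s p d, ← cyc d (s * p) TCd]
  have E2 : Tr (s * (p * d)) = Tr (a * p * (s * p)) - Tr (p * (a * (s * p))) := by
    rw [c2]
    have hop : d * (s * p) = a * p * (s * p) - p * (a * (s * p)) := by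
      rw [hd, sub_mul, mul_assoc p a (s * p)]
    rw [hop]; exact tsub _ _ TCapsp TCpasp
  -- step 3: the two middle terms agree
  have E3 : Tr (p * (a * p * s)) = Tr (a * p * (s * p)) := by
    rw [← cyc (a * p * s) p TCaps, mul_assoc (a * p) s p]
  -- step 4: the two outer terms agree: both equal Tr(a (s p))
  have E4 : Tr (a * p * s) = Tr (a * (s * p)) := by
    rw [cyc (a * p) s TCap, ← mul_assoc s a p, hsa, mul_assoc a s p]
  have E5 : Tr (p * (a * (s * p))) = Tr (a * (s * p)) := by
    rw [← cyc (a * (s * p)) p TCasp, mul_assoc a (s * p) p, mul_assoc s p p, hpp]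
  -- combine
  have := E0
  rw [E1, E2] at this
  rw [E3, E4, E5] at this
  linear_combination -this
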